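/- Let H ∈ ℝ^{d×d} be symmetric with all eigenvalues in [μ, L], 0 < μ ≤ L, and let A ∈ ℝ^{2d×2d} be the block matrix A = [[I − α(1+β)H, β²I], [−αH, βI]]. Then the spectral radius of A equals max over the eigenvalues λ of H of ρ_λ(α, β), and consequently ρ(A) ≤ max{ρ_μ(α, β), ρ_L(α, β)}. -/

import Mathlib

open Matrix

/-- The spectral radius of a real square matrix: the maximum modulus of its complex
eigenvalues. -/
noncomputable def specRad {m : Type*} [Fintype m] [DecidableEq m]
    (A : Matrix m m ℝ) : ℝ :=
  sSup ((fun z : ℂ => ‖z‖) '' spectrum ℂ (A.map (algebraMap ℝ ℂ)))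

/-- `ρ_λ(α, β)`. -/
noncomputable def rhoLam (α β lam : ℝ) : ℝ :=
  if 0 ≤ (1 + β) ^ 2 * (1 - α * lam) ^ 2 - 4 * β * (1 - α * lam) then
    (1 / 2) * |(1 + β) * (1 - α * lam)| +
      (1 / 2) * Real.sqrt ((1 + β) ^ 2 * (1 - α * lam) ^ 2 - 4 * β * (1 - α * lam))
  else Real.sqrt (β * (1 - α * lam))

/-! ### Auxiliary definitions and lemmas -/

lemma det_smul_one_add_smul_conj {n R : Type*} [Fintype n] [DecidableEq n] [CommRing R]
    (U V M : Matrix n n R) (v : n → R) (hUV : U * V = 1)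
    (hM : M = U * Matrix.diagonal v * V) (c e : R) :
    (c • (1 : Matrix n n R) + e • M).det = ∏ i, (c + e * v i) := by
  have h1 : c • (1 : Matrix n n R) + e • M
      = U * Matrix.diagonal (fun i => c + e * v i) * V := by
    have hd : Matrix.diagonal (fun i => c + e * v i)
        = c • (1 : Matrix n n R) + e • Matrix.diagonal v := by
      ext i j
      by_cases h : i = j <;> simp [Matrix.diagonal_apply, h, Matrix.one_apply]
    rw [hd, hM, Matrix.mul_add, Matrix.add_mul, Matrix.mul_smul, Matrix.mul_one,
      Matrix.smul_mul, hUV, Matrix.mul_smul, Matrix.smul_mul]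
  rw [h1, Matrix.det_mul, Matrix.det_mul]
  have h2 : U.det * (Matrix.diagonal fun i => c + e * v i).det * V.det
      = (U * V).det * (Matrix.diagonal fun i => c + e * v i).det := by
    rw [Matrix.det_mul]; ring
  rw [h2, hUV, Matrix.det_one, one_mul, Matrix.det_diagonal]

/-- The discriminant `Δ_λ`. -/
noncomputable def sDisc (α β lam : ℝ) : ℝ :=
  (1 + β) ^ 2 * (1 - α * lam) ^ 2 - 4 * β * (1 - α * lam)

/-- A complex square root of the discriminant. -/
noncomputable def sqrtD (α β lam : ℝ) : ℂ :=
  if 0 ≤ sDisc α β lam then ((Real.sqrt (sDisc α β lam) : ℝ) : ℂ)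
  else ((Real.sqrt (-sDisc α β lam) : ℝ) : ℂ) * Complex.I

/-- The two roots of `z² - (1+β)(1-αλ) z + β(1-αλ)`. -/
noncomputable def root1 (α β lam : ℝ) : ℂ :=
  ((((1 + β) * (1 - α * lam) : ℝ) : ℂ) + sqrtD α β lam) / 2

noncomputable def root2 (α β lam : ℝ) : ℂ :=
  ((((1 + β) * (1 - α * lam) : ℝ) : ℂ) - sqrtD α β lam) / 2

lemma sq_sqrtD (α β lam : ℝ) : (sqrtD α β lam) ^ 2 = ((sDisc α β lam : ℝ) : ℂ) := by
  rw [sqrtD]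
  split_ifs with h
  · rw [← Complex.ofReal_pow, Real.sq_sqrt h]
  · rw [mul_pow, Complex.I_sq, ← Complex.ofReal_pow, Real.sq_sqrt (by linarith)]
    push_cast
    ring

lemma quad_factor (α β lam : ℝ) (z : ℂ) :
    (z - root1 α β lam) * (z - root2 α β lam)
      = z ^ 2 - (((1 + β) * (1 - α * lam) : ℝ) : ℂ) * z + ((β * (1 - α * lam) : ℝ) : ℂ) := by
  have h : (sqrtD α β lam) ^ 2 = ((sDisc α β lam : ℝ) : ℂ) := sq_sqrtD α β lam
  rw [root1, root2]
  have hD : ((sDisc α β lam : ℝ) : ℂ)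
      = (((1 + β) * (1 - α * lam) : ℝ) : ℂ) ^ 2 - 4 * ((β * (1 - α * lam) : ℝ) : ℂ) := by
    rw [sDisc]; push_cast; ring
  linear_combination (-1/4 : ℂ) * h - (1/4 : ℂ) * hD

lemma max_abs_add_sub (t s : ℝ) (hs : 0 ≤ s) : max |t + s| |t - s| = |t| + s := by
  rcases le_total 0 t with ht | ht
  · apply le_antisymm
    · apply max_le
      · calc |t + s| ≤ |t| + |s| := abs_add_le _ _
          _ = |t| + s := by rw [abs_of_nonneg hs]
      · calc |t - s| ≤ |t| + |s| := abs_sub _ _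
          _ = |t| + s := by rw [abs_of_nonneg hs]
    · calc |t| + s = |t + s| := by rw [abs_of_nonneg ht, abs_of_nonneg (by linarith)]
        _ ≤ max |t + s| |t - s| := le_max_left _ _
  · apply le_antisymm
    · apply max_le
      · calc |t + s| ≤ |t| + |s| := abs_add_le _ _
          _ = |t| + s := by rw [abs_of_nonneg hs]
      · calc |t - s| ≤ |t| + |s| := abs_sub _ _
          _ = |t| + s := by rw [abs_of_nonneg hs]
    · calc |t| + s = |t - s| := by rw [abs_of_nonpos ht, abs_of_nonpos (by linarith)]; ring
        _ ≤ max |t + s| |t - s| := le_max_right _ _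

lemma rho_eq_max (α β lam : ℝ) :
    rhoLam α β lam = max (‖root1 α β lam‖) (‖root2 α β lam‖) := by
  have hcond : rhoLam α β lam =
      if 0 ≤ sDisc α β lam then
        (1 / 2) * |(1 + β) * (1 - α * lam)| + (1 / 2) * Real.sqrt (sDisc α β lam)
      else Real.sqrt (β * (1 - α * lam)) := rfl
  rw [hcond]
  split_ifs with h
  · have h1 : ‖root1 α β lam‖
        = |(1 + β) * (1 - α * lam) + Real.sqrt (sDisc α β lam)| / 2 := by
      rw [root1, sqrtD, if_pos h,
        show ((((1 + β) * (1 - α * lam) : ℝ)) : ℂ) + ((Real.sqrt (sDisc α β lam) : ℝ) : ℂ)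
          = (((1 + β) * (1 - α * lam) + Real.sqrt (sDisc α β lam) : ℝ) : ℂ) by push_cast; ring]
      rw [norm_div, Complex.norm_real, Real.norm_eq_abs, Complex.norm_two]
    have h2 : ‖root2 α β lam‖
        = |(1 + β) * (1 - α * lam) - Real.sqrt (sDisc α β lam)| / 2 := by
      rw [root2, sqrtD, if_pos h,
        show ((((1 + β) * (1 - α * lam) : ℝ)) : ℂ) - ((Real.sqrt (sDisc α β lam) : ℝ) : ℂ)
          = (((1 + β) * (1 - α * lam) - Real.sqrt (sDisc α β lam) : ℝ) : ℂ) by push_cast; ring]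
      rw [norm_div, Complex.norm_real, Real.norm_eq_abs, Complex.norm_two]
    rw [h1, h2, max_div_div_right (by norm_num : (0:ℝ) ≤ 2),
      max_abs_add_sub _ _ (Real.sqrt_nonneg _)]
    ring
  · have hs2 : Real.sqrt (-sDisc α β lam) ^ 2 = -sDisc α β lam :=
      Real.sq_sqrt (by linarith)
    have h1 : (‖root1 α β lam‖) ^ 2 = β * (1 - α * lam) := by
      rw [Complex.sq_norm, root1, sqrtD, if_neg h, map_div₀,
        Complex.normSq_add_mul_I, show ((2:ℂ)) = (((2:ℝ)):ℂ) by norm_num,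
        Complex.normSq_ofReal]
      rw [sDisc] at hs2 ⊢
      nlinarith [hs2]
    have h2 : (‖root2 α β lam‖) ^ 2 = β * (1 - α * lam) := by
      have : root2 α β lam
          = (((((1 + β) * (1 - α * lam) : ℝ)) : ℂ)
            + ((-Real.sqrt (-sDisc α β lam) : ℝ) : ℂ) * Complex.I) / 2 := by
        rw [root2, sqrtD, if_neg h]; push_cast; ring
      rw [Complex.sq_norm, this, map_div₀, Complex.normSq_add_mul_I,
        show ((2:ℂ)) = (((2:ℝ)):ℂ) by norm_num, Complex.normSq_ofReal]
      rw [sDisc] at hs2 ⊢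
      nlinarith [hs2]
    rw [← h1]
    have h12 : ‖root1 α β lam‖ = ‖root2 α β lam‖ := by
      nlinarith [h1, h2, norm_nonneg (root1 α β lam), norm_nonneg (root2 α β lam)]
    rw [← h12, max_self, Real.sqrt_sq (norm_nonneg _)]

lemma rho_nonneg (α β lam : ℝ) : 0 ≤ rhoLam α β lam := by
  rw [rho_eq_max]
  exact le_trans (norm_nonneg _) (le_max_left _ _)

/-- `ρ` as a function of `σ = 1 - αλ`. -/
noncomputable def rhoSig (β s : ℝ) : ℝ :=
  if 0 ≤ (1 + β) ^ 2 * s ^ 2 - 4 * β * s then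
    (1 / 2) * |(1 + β) * s| + (1 / 2) * Real.sqrt ((1 + β) ^ 2 * s ^ 2 - 4 * β * s)
  else Real.sqrt (β * s)

lemma rhoLam_eq_rhoSig (α β lam : ℝ) : rhoLam α β lam = rhoSig β (1 - α * lam) := rfl

lemma rhoSig_mono_nonneg {β : ℝ} (hβ : 0 ≤ β) {s1 s2 : ℝ}
    (h1 : 0 ≤ s1) (h12 : s1 ≤ s2) : rhoSig β s1 ≤ rhoSig β s2 := by
  have h2 : 0 ≤ s2 := le_trans h1 h12
  have hc : (0:ℝ) < 1 + β := by linarith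
  rw [rhoSig, rhoSig]
  split_ifs with d1 d2 d2
  · rcases eq_or_lt_of_le h1 with h0 | h0
    · have hd1 : (1 + β) ^ 2 * s1 ^ 2 - 4 * β * s1 = 0 := by rw [← h0]; ring
      rw [hd1, ← h0]
      simp [Real.sqrt_nonneg]
      positivity
    · have k1 : 4 * β ≤ (1 + β) ^ 2 * s1 := by nlinarith
      have k2 : (1 + β) ^ 2 * s1 ^ 2 - 4 * β * s1 ≤ (1 + β) ^ 2 * s2 ^ 2 - 4 * β * s2 := by
        nlinarith [mul_nonneg (sub_nonneg.mpr h12)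
          (show (0:ℝ) ≤ (1 + β) ^ 2 * (s1 + s2) - 4 * β by nlinarith)]
      have hsq := Real.sqrt_le_sqrt k2
      have habs1 : |(1 + β) * s1| = (1 + β) * s1 := abs_of_nonneg (by positivity)
      have habs2 : |(1 + β) * s2| = (1 + β) * s2 := abs_of_nonneg (by positivity)
      rw [habs1, habs2]
      nlinarith [mul_le_mul_of_nonneg_left h12 hc.le]
  · rcases eq_or_lt_of_le h1 with h0 | h0
    · have hd1 : (1 + β) ^ 2 * s1 ^ 2 - 4 * β * s1 = 0 := by rw [← h0]; ring
      rw [hd1, ← h0]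
      simp [Real.sqrt_nonneg]
    · exfalso
      have k1 : 4 * β ≤ (1 + β) ^ 2 * s1 := by nlinarith
      have h02 : 0 < s2 := lt_of_lt_of_le h0 h12
      have : 4 * β ≤ (1 + β) ^ 2 * s2 := le_trans k1 (by nlinarith)
      nlinarith
  · have h01 : 0 < s1 := by
      rcases eq_or_lt_of_le h1 with h0 | h0
      · exfalso; apply d1; rw [← h0]; norm_num
      · exact h0
    have h02 : 0 < s2 := lt_of_lt_of_le h01 h12
    have k2 : 4 * β ≤ (1 + β) ^ 2 * s2 := by nlinarith
    have key : Real.sqrt (β * s1) ≤ (1 / 2) * ((1 + β) * s2) := by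
      rw [show (1 / 2) * ((1 + β) * s2) = Real.sqrt (((1 / 2) * ((1 + β) * s2)) ^ 2) from
        (Real.sqrt_sq (by positivity)).symm]
      apply Real.sqrt_le_sqrt
      nlinarith [mul_le_mul_of_nonneg_left h12 hβ]
    have habs2 : |(1 + β) * s2| = (1 + β) * s2 := abs_of_nonneg (by positivity)
    rw [habs2]
    nlinarith [Real.sqrt_nonneg ((1 + β) ^ 2 * s2 ^ 2 - 4 * β * s2)]
  · apply Real.sqrt_le_sqrt
    nlinarith [mul_le_mul_of_nonneg_left h12 hβ]

lemma rhoSig_anti_nonpos {β : ℝ} (hβ : 0 ≤ β) {s1 s2 : ℝ}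
    (h1 : s1 ≤ 0) (h21 : s2 ≤ s1) : rhoSig β s1 ≤ rhoSig β s2 := by
  have h2 : s2 ≤ 0 := le_trans h21 h1
  have hc : (0:ℝ) < 1 + β := by linarith
  have d1 : 0 ≤ (1 + β) ^ 2 * s1 ^ 2 - 4 * β * s1 := by nlinarith
  have d2 : 0 ≤ (1 + β) ^ 2 * s2 ^ 2 - 4 * β * s2 := by nlinarith
  rw [rhoSig, rhoSig, if_pos d1, if_pos d2]
  have habs1 : |(1 + β) * s1| = -((1 + β) * s1) := abs_of_nonpos (by nlinarith)
  have habs2 : |(1 + β) * s2| = -((1 + β) * s2) := abs_of_nonpos (by nlinarith)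
  have k2 : (1 + β) ^ 2 * s1 ^ 2 - 4 * β * s1 ≤ (1 + β) ^ 2 * s2 ^ 2 - 4 * β * s2 := by
    nlinarith [mul_nonneg (sub_nonneg.mpr h21)
      (show (0:ℝ) ≤ 4 * β - (1 + β) ^ 2 * (s1 + s2) by nlinarith)]
  have hsq := Real.sqrt_le_sqrt k2
  rw [habs1, habs2]
  nlinarith [mul_le_mul_of_nonneg_left h21 hc.le]

/-- Key determinant identity, valid for `z ≠ β`. -/
lemma det_key {d : ℕ} (α β : ℝ) (Hc : Matrix (Fin d) (Fin d) ℂ) (ev : Fin d → ℝ)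
    (detC : ∀ c e : ℂ, (c • (1 : Matrix (Fin d) (Fin d) ℂ) + e • Hc).det
      = ∏ i, (c + e * (ev i : ℂ)))
    (z : ℂ) (hz : z ≠ (β : ℂ)) :
    (z • (1 : Matrix (Fin d ⊕ Fin d) (Fin d ⊕ Fin d) ℂ)
      - fromBlocks (1 - (((α * (1 + β) : ℝ)) : ℂ) • Hc) ((((β ^ 2 : ℝ)) : ℂ) • 1)
          (-((((α : ℝ)) : ℂ) • Hc)) ((((β : ℝ)) : ℂ) • 1)).det
    = ∏ i, (z ^ 2 - (((1 + β) * (1 - α * ev i) : ℝ) : ℂ) * z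
        + ((β * (1 - α * ev i) : ℝ) : ℂ)) := by
  have hzb : z - (β : ℂ) ≠ 0 := sub_ne_zero.mpr hz
  have e11 : z • (1 : Matrix (Fin d) (Fin d) ℂ) + -(1 - (((α * (1 + β) : ℝ)) : ℂ) • Hc)
      = (z - 1) • 1 + (((α * (1 + β) : ℝ)) : ℂ) • Hc := by module
  have e12 : z • (0 : Matrix (Fin d) (Fin d) ℂ) + -((((β ^ 2 : ℝ)) : ℂ) • 1)
      = (-(β ^ 2 : ℂ)) • (1 : Matrix (Fin d) (Fin d) ℂ) := by push_cast; module
  have e21 : z • (0 : Matrix (Fin d) (Fin d) ℂ) + - -((((α : ℝ)) : ℂ) • Hc)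
      = (((α : ℝ)) : ℂ) • Hc := by module
  have e22 : z • (1 : Matrix (Fin d) (Fin d) ℂ) + -((((β : ℝ)) : ℂ) • 1)
      = (z - (β : ℂ)) • (1 : Matrix (Fin d) (Fin d) ℂ) := by module
  have hblock : z • (1 : Matrix (Fin d ⊕ Fin d) (Fin d ⊕ Fin d) ℂ)
      - fromBlocks (1 - (((α * (1 + β) : ℝ)) : ℂ) • Hc) ((((β ^ 2 : ℝ)) : ℂ) • 1)
          (-((((α : ℝ)) : ℂ) • Hc)) ((((β : ℝ)) : ℂ) • 1)
      = fromBlocks ((z - 1) • 1 + (((α * (1 + β) : ℝ)) : ℂ) • Hc) ((-(β ^ 2 : ℂ)) • 1)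
          (((α : ℝ) : ℂ) • Hc) ((z - (β : ℂ)) • 1) := by
    rw [← fromBlocks_one, fromBlocks_smul, sub_eq_add_neg, fromBlocks_neg, fromBlocks_add,
      e11, e12, e21, e22]
  rw [hblock]
  letI : Invertible ((z - (β : ℂ)) • (1 : Matrix (Fin d) (Fin d) ℂ)) :=
    ⟨(z - (β : ℂ))⁻¹ • 1, by
      simp [smul_smul, inv_mul_cancel₀ hzb, mul_inv_cancel₀ hzb],
      by simp [smul_smul, inv_mul_cancel₀ hzb, mul_inv_cancel₀ hzb]⟩
  rw [det_fromBlocks₂₂]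
  have hinv : ⅟((z - (β : ℂ)) • (1 : Matrix (Fin d) (Fin d) ℂ)) = (z - (β : ℂ))⁻¹ • 1 := rfl
  rw [hinv]
  have hdetD : ((z - (β : ℂ)) • (1 : Matrix (Fin d) (Fin d) ℂ)).det = (z - (β : ℂ)) ^ d := by
    rw [Matrix.det_smul, Matrix.det_one, mul_one, Fintype.card_fin]
  have hcomb : (z - 1) • (1 : Matrix (Fin d) (Fin d) ℂ) + (((α * (1 + β) : ℝ)) : ℂ) • Hc
      - (-(β ^ 2 : ℂ)) • (1 : Matrix (Fin d) (Fin d) ℂ) * ((z - (β : ℂ))⁻¹ • 1)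
        * ((((α : ℝ)) : ℂ) • Hc)
      = (z - 1) • 1
        + ((((α * (1 + β) : ℝ)) : ℂ) + (β ^ 2 : ℂ) * (z - (β : ℂ))⁻¹ * (α : ℂ)) • Hc := by
    simp only [Matrix.smul_mul, Matrix.mul_smul, Matrix.one_mul, smul_smul]
    module
  rw [hcomb, hdetD, detC]
  rw [show ((z - (β:ℂ)) ^ d) = ∏ _i : Fin d, (z - (β:ℂ)) by
    rw [Finset.prod_const, Finset.card_univ, Fintype.card_fin]]
  rw [← Finset.prod_mul_distrib]
  refine Finset.prod_congr rfl fun i _ => ?_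
  push_cast
  field_simp
  ring

/-- For `H` symmetric with all eigenvalues in `[μ, L]` and
`A = [[I − α(1+β)H, β²I], [−αH, βI]]`, the spectral radius of `A` equals the maximum of
`ρ_λ(α, β)` over the eigenvalues `λ` of `H`, and consequently
`ρ(A) ≤ max {ρ_μ(α,β), ρ_L(α,β)}`. -/
theorem stmt8 {d : ℕ} (μ L α β : ℝ) (hμ : 0 < μ) (hμL : μ ≤ L)
    (hα : 0 < α) (hβ : 0 ≤ β)
    (H : Matrix (Fin d) (Fin d) ℝ) (hsymm : H.IsSymm)
    (hspec : spectrum ℝ H ⊆ Set.Icc μ L)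
    (A : Matrix (Fin d ⊕ Fin d) (Fin d ⊕ Fin d) ℝ)
    (hA : A = Matrix.fromBlocks (1 - (α * (1 + β)) • H) ((β ^ 2) • 1)
      (-(α • H)) (β • 1)) :
    specRad A = sSup ((fun lam => rhoLam α β lam) '' spectrum ℝ H) ∧
    specRad A ≤ max (rhoLam α β μ) (rhoLam α β L) := by
  have hH : H.IsHermitian := by
    rw [Matrix.IsHermitian, Matrix.conjTranspose_eq_transpose_of_trivial]; exact hsymm
  set ev : Fin d → ℝ := hH.eigenvalues with hev
  set U : Matrix (Fin d) (Fin d) ℝ := (hH.eigenvectorUnitary : Matrix (Fin d) (Fin d) ℝ) with hU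
  have hUV : U * star U = 1 := Unitary.mul_star_self_of_mem (hH.eigenvectorUnitary).2
  have hM : H = U * Matrix.diagonal ev * star U := by
    have := hH.spectral_theorem
    rwa [show (RCLike.ofReal ∘ hH.eigenvalues : Fin d → ℝ) = ev by
      funext i; simp [RCLike.ofReal_real_eq_id, hev], Unitary.conjStarAlgAut_apply] at this
  have detR : ∀ c e : ℝ, (c • (1 : Matrix (Fin d) (Fin d) ℝ) + e • H).det
      = ∏ i, (c + e * ev i) := fun c e =>
    det_smul_one_add_smul_conj U (star U) H ev hUV hM c e
  set f := algebraMap ℝ ℂ with hf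
  have hUVC : U.map f * (star U).map f = 1 := by
    rw [← Matrix.map_mul, hUV, Matrix.map_one f (map_zero f) (map_one f)]
  have hMC : H.map f = U.map f * Matrix.diagonal (fun i => (ev i : ℂ)) * (star U).map f := by
    rw [hM, Matrix.map_mul, Matrix.map_mul, Matrix.diagonal_map (map_zero f)]
    rfl
  have detC : ∀ c e : ℂ, (c • (1 : Matrix (Fin d) (Fin d) ℂ) + e • H.map f).det
      = ∏ i, (c + e * (ev i : ℂ)) := fun c e =>
    det_smul_one_add_smul_conj (U.map f) ((star U).map f) (H.map f) _ hUVC hMC c e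
  -- the spectrum of H is the range of the eigenvalues
  have hspecH : spectrum ℝ H = Set.range ev := by
    ext z
    have hdet : (z • (1 : Matrix (Fin d) (Fin d) ℝ) - H).det = ∏ i, (z - ev i) := by
      rw [sub_eq_add_neg, ← neg_one_smul ℝ H, detR z (-1)]
      exact Finset.prod_congr rfl fun i _ => by ring
    rw [spectrum.mem_iff, Algebra.algebraMap_eq_smul_one, Matrix.isUnit_iff_isUnit_det,
      isUnit_iff_ne_zero, not_not, hdet, Finset.prod_eq_zero_iff]
    constructor
    · rintro ⟨i, -, h⟩; exact ⟨i, (sub_eq_zero.mp h).symm⟩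
    · rintro ⟨i, h⟩; exact ⟨i, Finset.mem_univ i, by rw [h]; ring⟩
  -- the image of A in the complex matrices
  have hAmap : A.map f = fromBlocks (1 - (((α * (1 + β) : ℝ)) : ℂ) • H.map f)
      ((((β ^ 2 : ℝ)) : ℂ) • 1) (-((((α : ℝ)) : ℂ) • H.map f)) ((((β : ℝ)) : ℂ) • 1) := by
    subst hA
    ext (i | i) (j | j) <;>
      by_cases h : i = j <;>
        simp [Matrix.map_apply, Matrix.one_apply, h, hf, Matrix.fromBlocks,
          Matrix.sub_apply, Matrix.smul_apply, Matrix.neg_apply, Matrix.of_apply,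
          smul_eq_mul, Algebra.algebraMap_self, _root_.map_sub, _root_.map_mul, _root_.map_one, _root_.map_zero] <;>
        push_cast <;> ring
  -- determinant identity for all z by continuity
  have key : ∀ z : ℂ, (z • (1 : Matrix (Fin d ⊕ Fin d) (Fin d ⊕ Fin d) ℂ) - A.map f).det
      = ∏ i, ((z - root1 α β (ev i)) * (z - root2 α β (ev i))) := by
    have heq : ∀ z : ℂ, (z • (1 : Matrix (Fin d ⊕ Fin d) (Fin d ⊕ Fin d) ℂ) - A.map f).det
        = ∏ i, (z ^ 2 - (((1 + β) * (1 - α * ev i) : ℝ) : ℂ) * z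
            + ((β * (1 - α * ev i) : ℝ) : ℂ)) := by
      have hcontF : Continuous fun z : ℂ =>
          (z • (1 : Matrix (Fin d ⊕ Fin d) (Fin d ⊕ Fin d) ℂ) - A.map f).det :=
        ((continuous_id.smul continuous_const).sub continuous_const).matrix_det
      have hcontG : Continuous fun z : ℂ =>
          ∏ i, (z ^ 2 - (((1 + β) * (1 - α * ev i) : ℝ) : ℂ) * z
            + ((β * (1 - α * ev i) : ℝ) : ℂ)) := by
        apply continuous_finset_prod
        intro i _
        fun_prop
      have heqon : Set.EqOn
          (fun z : ℂ => (z • (1 : Matrix (Fin d ⊕ Fin d) (Fin d ⊕ Fin d) ℂ) - A.map f).det)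
          (fun z : ℂ => ∏ i, (z ^ 2 - (((1 + β) * (1 - α * ev i) : ℝ) : ℂ) * z
            + ((β * (1 - α * ev i) : ℝ) : ℂ))) {((β : ℝ) : ℂ)}ᶜ := by
        intro z hz
        simp only
        rw [hAmap]
        exact det_key α β (H.map f) ev detC z hz
      have := Continuous.ext_on (dense_compl_singleton ((β : ℝ) : ℂ)) hcontF hcontG heqon
      exact fun z => congrFun this z
    intro z
    rw [heq z]
    exact (Finset.prod_congr rfl fun i _ => (quad_factor α β (ev i) z)).symm
  -- spectrum of A
  have hspecA : ∀ z : ℂ, z ∈ spectrum ℂ (A.map f) ↔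
      ∃ i, z = root1 α β (ev i) ∨ z = root2 α β (ev i) := by
    intro z
    rw [spectrum.mem_iff, Algebra.algebraMap_eq_smul_one, Matrix.isUnit_iff_isUnit_det,
      isUnit_iff_ne_zero, not_not, key z, Finset.prod_eq_zero_iff]
    constructor
    · rintro ⟨i, -, h⟩
      rcases mul_eq_zero.mp h with h | h
      · exact ⟨i, Or.inl (sub_eq_zero.mp h)⟩
      · exact ⟨i, Or.inr (sub_eq_zero.mp h)⟩
    · rintro ⟨i, h | h⟩
      · exact ⟨i, Finset.mem_univ i, by rw [h, sub_self, zero_mul]⟩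
      · exact ⟨i, Finset.mem_univ i, by rw [h, sub_self, mul_zero]⟩
  -- the two sets of interest
  set S : Set ℝ := (fun z : ℂ => ‖z‖) '' spectrum ℂ (A.map f) with hS
  set T : Set ℝ := (fun lam => rhoLam α β lam) '' spectrum ℝ H with hT
  have hSdesc : S = {x : ℝ | ∃ i, x = ‖root1 α β (ev i)‖
      ∨ x = ‖root2 α β (ev i)‖} := by
    ext x
    simp only [hS, Set.mem_image, Set.mem_setOf_eq]
    constructor
    · rintro ⟨z, hz, rfl⟩
      obtain ⟨i, h | h⟩ := (hspecA z).mp hz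
      · exact ⟨i, Or.inl (by rw [h])⟩
      · exact ⟨i, Or.inr (by rw [h])⟩
    · rintro ⟨i, h | h⟩
      · exact ⟨root1 α β (ev i), (hspecA _).mpr ⟨i, Or.inl rfl⟩, h.symm⟩
      · exact ⟨root2 α β (ev i), (hspecA _).mpr ⟨i, Or.inr rfl⟩, h.symm⟩
  have hTdesc : T = Set.range (fun i => rhoLam α β (ev i)) := by
    rw [hT, hspecH, ← Set.range_comp]
    rfl
  -- finiteness / boundedness
  have hSfin : S.Finite := by
    rw [hSdesc]
    have : {x : ℝ | ∃ i, x = ‖root1 α β (ev i)‖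
        ∨ x = ‖root2 α β (ev i)‖}
        ⊆ Set.range (fun i => ‖root1 α β (ev i)‖)
          ∪ Set.range (fun i => ‖root2 α β (ev i)‖) := by
      rintro x ⟨i, h | h⟩
      · exact Or.inl ⟨i, h.symm⟩
      · exact Or.inr ⟨i, h.symm⟩
    exact Set.Finite.subset ((Set.finite_range _).union (Set.finite_range _)) this
  have hTfin : T.Finite := by
    rw [hTdesc]; exact Set.finite_range _
  have hSbdd : BddAbove S := hSfin.bddAbove
  have hTbdd : BddAbove T := hTfin.bddAbove
  -- main equality
  have main : sSup S = sSup T := by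
    rcases isEmpty_or_nonempty (Fin d) with hd | hd
    · have hSe : S = ∅ := by
        rw [hSdesc]
        ext x
        simp only [Set.mem_setOf_eq, Set.mem_empty_iff_false, iff_false]
        rintro ⟨i, -⟩
        exact (hd.false i).elim
      have hTe : T = ∅ := by
        rw [hTdesc]
        simp [Set.range_eq_empty]
      rw [hSe, hTe]
    · apply le_antisymm
      · apply Real.sSup_le
        · intro x hx
          rw [hSdesc] at hx
          obtain ⟨i, h | h⟩ := hx
          · calc x = ‖root1 α β (ev i)‖ := h
              _ ≤ rhoLam α β (ev i) := by rw [rho_eq_max]; exact le_max_left _ _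
              _ ≤ sSup T := le_csSup hTbdd (by rw [hTdesc]; exact ⟨i, rfl⟩)
          · calc x = ‖root2 α β (ev i)‖ := h
              _ ≤ rhoLam α β (ev i) := by rw [rho_eq_max]; exact le_max_right _ _
              _ ≤ sSup T := le_csSup hTbdd (by rw [hTdesc]; exact ⟨i, rfl⟩)
        · obtain ⟨i⟩ := hd
          exact le_trans (rho_nonneg α β (ev i))
            (le_csSup hTbdd (by rw [hTdesc]; exact ⟨i, rfl⟩))
      · apply Real.sSup_le
        · intro x hx
          rw [hTdesc] at hx
          obtain ⟨i, rfl⟩ := hx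
          show rhoLam α β (ev i) ≤ sSup S
          rcases max_cases (‖root1 α β (ev i)‖)
            (‖root2 α β (ev i)‖) with ⟨hm, -⟩ | ⟨hm, -⟩
          · rw [rho_eq_max, hm]
            exact le_csSup hSbdd (by rw [hSdesc]; exact ⟨i, Or.inl rfl⟩)
          · rw [rho_eq_max, hm]
            exact le_csSup hSbdd (by rw [hSdesc]; exact ⟨i, Or.inr rfl⟩)
        · obtain ⟨i⟩ := hd
          exact le_trans (norm_nonneg (root1 α β (ev i)))
            (le_csSup hSbdd (by rw [hSdesc]; exact ⟨i, Or.inl rfl⟩))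
  have hbound : sSup T ≤ max (rhoLam α β μ) (rhoLam α β L) := by
    apply Real.sSup_le
    · intro x hx
      rw [hT] at hx
      obtain ⟨lam, hlam, rfl⟩ := hx
      obtain ⟨hlam1, hlam2⟩ := hspec hlam
      show rhoLam α β lam ≤ max (rhoLam α β μ) (rhoLam α β L)
      rcases le_total 0 (1 - α * lam) with hs | hs
      · refine le_trans ?_ (le_max_left _ _)
        rw [rhoLam_eq_rhoSig, rhoLam_eq_rhoSig]
        exact rhoSig_mono_nonneg hβ hs (by nlinarith)
      · refine le_trans ?_ (le_max_right _ _)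
        rw [rhoLam_eq_rhoSig, rhoLam_eq_rhoSig]
        exact rhoSig_anti_nonpos hβ hs (by nlinarith)
    · exact le_trans (rho_nonneg α β μ) (le_max_left _ _)
  refine ⟨main, ?_⟩
  rw [show specRad A = sSup S from rfl, main]
  exact hbound
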